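/- Let (g,h,φ) be a morphism Lie algebra with representation (V,W,ψ). Given 2-cocycles (θ,γ,η) and (θ',γ',η') that differ by a simple coboundary δ(d₀,δ₀,0) for some (d₀,δ₀,0) ∈ Hom(g,V) ⊕ Hom(h,W) ⊕ 0, the abelian extensions (ĝ,ĥ,φ̂) and (ĝ',ĥ',φ̂') constructed from them are isomorphic via α(x,v) = (x, v + d₀(x)) and β(h,w) = (h, w + δ₀(h)); in particular α, β are Lie algebra isomorphisms and φ̂'∘α = β∘φ̂. -/

import Mathlib

attribute [local instance 100] LieRing.ofAssociativeRing

/-- The Chevalley–Eilenberg differential (on plain cochains), for a bracket `br` on `L`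
and an action `ρ` of `L` on `M`:
`(δf)(x₁,…,x_{n+1}) = Σᵢ (-1)^{i+1} ρ(xᵢ) f(…,x̂ᵢ,…) + Σ_{i<j} (-1)^{i+j} f([xᵢ,xⱼ],…,x̂ᵢ,…,x̂ⱼ,…)`. -/
def ceD {L M : Type*} [AddCommGroup M] (br : L → L → L) (ρ : L → M → M)
    {n : ℕ} (f : (Fin n → L) → M) : (Fin (n + 1) → L) → M :=
  fun x =>
    (∑ i : Fin (n + 1), ((-1 : ℤ) ^ (i : ℕ)) • ρ (x i) (f (x ∘ i.succAbove)))
      + ∑ i : Fin (n + 1), ∑ j : Fin (n + 1),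
          if h : (i : ℕ) < (j : ℕ) then
            ((-1 : ℤ) ^ ((i : ℕ) + (j : ℕ))) • f (fun t : Fin n =>
              Fin.cons (α := fun _ => L) (br (x i) (x j))
                (fun s : Fin (n - 1) =>
                  x (j.succAbove (Fin.cast (by have := j.isLt; omega)
                    (Fin.succAbove ⟨(i : ℕ), by have := j.isLt; omega⟩ s))))
                (Fin.cast (by have := j.isLt; omega) t))
          else 0

theorem ceD_one {L M : Type*} [AddCommGroup M] (br : L → L → L) (ρ : L → M → M) (f : L → M)
    (x : Fin 2 → L) :
    ceD br ρ (fun t : Fin 1 → L => f (t 0)) x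
      = ρ (x 0) (f (x 1)) - ρ (x 1) (f (x 0)) - f (br (x 0) (x 1)) := by
  simp [ceD, Fin.sum_univ_two, Fin.succAbove]
  abel

/-- The bracket on `ĝ = g ⊕ V` determined by a 2-cochain `θ`. -/
def extBracket {k g V : Type*} [CommRing k] [LieRing g] [LieAlgebra k g]
    [AddCommGroup V] [Module k V] (ρV : g →ₗ⁅k⁆ Module.End k V)
    (θ : AlternatingMap k g V (Fin 2)) (a b : g × V) : g × V :=
  (⁅a.1, b.1⁆, ρV a.1 b.2 - ρV b.1 a.2 + θ ![a.1, b.1])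

/-- The map `φ̂ : ĝ → ĥ`, `φ̂(x,v) = (φ x, ψ v + η x)`. -/
def extHom {k g h V W : Type*} [CommRing k] [LieRing g] [LieAlgebra k g]
    [LieRing h] [LieAlgebra k h] [AddCommGroup V] [Module k V]
    [AddCommGroup W] [Module k W]
    (φ : g →ₗ⁅k⁆ h) (ψ : V →ₗ[k] W) (η : g →ₗ[k] W) (a : g × V) : h × W :=
  (φ a.1, ψ a.2 + η a.1)

/-- Let `(g,h,φ)` be a morphism Lie algebra with representation `(V,W,ψ)`.
Given 2-cocycles `(θ,γ,η)` and `(θ',γ',η')` differing by a simple coboundary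
`δ(d₀,δ₀,0)` (i.e. `θ' = θ − δ'(d₀)`, `γ' = γ − δ''(δ₀)`, `η' = η − (ψ∘d₀ − δ₀∘φ)`),
the abelian extensions `(ĝ,ĥ,φ̂)` and `(ĝ',ĥ',φ̂')` constructed from them are
isomorphic via `α(x,v) = (x, v + d₀ x)` and `β(z,w) = (z, w + δ₀ z)`: `α`, `β` are
bijections intertwining the brackets and `φ̂' ∘ α = β ∘ φ̂`. -/
theorem statement15 {k g h V W : Type*} [CommRing k]
    [LieRing g] [LieAlgebra k g] [LieRing h] [LieAlgebra k h]
    [AddCommGroup V] [Module k V] [AddCommGroup W] [Module k W]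
    (φ : g →ₗ⁅k⁆ h) (ρV : g →ₗ⁅k⁆ Module.End k V) (ρW : h →ₗ⁅k⁆ Module.End k W)
    (ψ : V →ₗ[k] W)
    (hψ : ∀ (x : g) (v : V), ψ (ρV x v) = ρW (φ x) (ψ v))
    (θ θ' : AlternatingMap k g V (Fin 2)) (γ γ' : AlternatingMap k h W (Fin 2))
    (η η' : g →ₗ[k] W) (d₀ : g →ₗ[k] V) (δ₀ : h →ₗ[k] W)
    -- (θ,γ,η) and (θ',γ',η') are 2-cocycles:
    (hθ : ceD (fun a b : g => ⁅a, b⁆) (fun x u => ρV x u) (⇑θ) = 0)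
    (hγ : ceD (fun a b : h => ⁅a, b⁆) (fun z w => ρW z w) (⇑γ) = 0)
    (hη : (fun y : Fin 2 → g =>
        ψ (θ y) - γ (fun i => φ (y i))
          - ceD (fun a b : g => ⁅a, b⁆) (fun x w => ρW (φ x) w)
              (fun t : Fin 1 → g => η (t 0)) y) = 0)
    (hθ' : ceD (fun a b : g => ⁅a, b⁆) (fun x u => ρV x u) (⇑θ') = 0)
    (hγ' : ceD (fun a b : h => ⁅a, b⁆) (fun z w => ρW z w) (⇑γ') = 0)
    (hη' : (fun y : Fin 2 → g =>
        ψ (θ' y) - γ' (fun i => φ (y i))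
          - ceD (fun a b : g => ⁅a, b⁆) (fun x w => ρW (φ x) w)
              (fun t : Fin 1 → g => η' (t 0)) y) = 0)
    -- they differ by the simple coboundary δ(d₀, δ₀, 0):
    (hd : ⇑θ' = ⇑θ - ceD (fun a b : g => ⁅a, b⁆) (fun x u => ρV x u)
        (fun t : Fin 1 → g => d₀ (t 0)))
    (hδ : ⇑γ' = ⇑γ - ceD (fun a b : h => ⁅a, b⁆) (fun z w => ρW z w)
        (fun t : Fin 1 → h => δ₀ (t 0)))
    (he : ∀ x : g, η' x = η x - (ψ (d₀ x) - δ₀ (φ x))) :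
    -- the isomorphism (α, β):
    Function.Bijective (fun a : g × V => (a.1, a.2 + d₀ a.1)) ∧
    Function.Bijective (fun a : h × W => (a.1, a.2 + δ₀ a.1)) ∧
    (∀ a b : g × V,
      (fun c : g × V => (c.1, c.2 + d₀ c.1)) (extBracket ρV θ a b) =
        extBracket ρV θ'
          ((fun c : g × V => (c.1, c.2 + d₀ c.1)) a)
          ((fun c : g × V => (c.1, c.2 + d₀ c.1)) b)) ∧
    (∀ a b : h × W,
      (fun c : h × W => (c.1, c.2 + δ₀ c.1)) (extBracket ρW γ a b) =
        extBracket ρW γ'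
          ((fun c : h × W => (c.1, c.2 + δ₀ c.1)) a)
          ((fun c : h × W => (c.1, c.2 + δ₀ c.1)) b)) ∧
    (∀ a : g × V,
      extHom φ ψ η' ((fun c : g × V => (c.1, c.2 + d₀ c.1)) a) =
        (fun c : h × W => (c.1, c.2 + δ₀ c.1)) (extHom φ ψ η a)) := by
  refine ⟨?_, ?_, ?_, ?_, ?_⟩
  · exact ⟨fun a b hab => by
      obtain ⟨h1, h2⟩ := Prod.mk.injEq .. ▸ hab
      exact Prod.ext h1 (by simpa [h1] using h2),
      fun a => ⟨(a.1, a.2 - d₀ a.1), by simp⟩⟩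
  · exact ⟨fun a b hab => by
      obtain ⟨h1, h2⟩ := Prod.mk.injEq .. ▸ hab
      exact Prod.ext h1 (by simpa [h1] using h2),
      fun a => ⟨(a.1, a.2 - δ₀ a.1), by simp⟩⟩
  · intro a b
    have hd' := congrFun hd ![a.1, b.1]
    rw [Pi.sub_apply, ceD_one] at hd'
    simp only [Matrix.cons_val_zero, Matrix.cons_val_one, Matrix.head_cons, Pi.sub_apply] at hd'
    simp only [extBracket]
    refine Prod.ext rfl ?_
    dsimp only
    rw [hd']
    simp only [map_sub, map_add]
    abel
  · intro a b
    have hd' := congrFun hδ ![a.1, b.1]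
    rw [Pi.sub_apply, ceD_one] at hd'
    simp only [Matrix.cons_val_zero, Matrix.cons_val_one, Matrix.head_cons, Pi.sub_apply] at hd'
    simp only [extBracket]
    refine Prod.ext rfl ?_
    dsimp only
    rw [hd']
    simp only [map_sub, map_add]
    abel
  · intro a
    simp only [extHom, he, map_add]
    exact Prod.ext rfl (by dsimp only; abel)
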